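/- Let f : {−1,1}^n → {−1,1} be computable by a decision tree of size s and let τ > 0. Then the number of indices i ∈ {1,…,n} with Inf_i(f) ≥ τ is at most (log₂ s)/τ. -/

import Mathlib

/-!
Decision trees over {-1,1}^n, where a point of the cube is encoded as `x : Fin n → Bool`
(`true` encodes 1, `false` encodes -1).
-/

/-- Decision trees with values in `Y` over `n` boolean variables. -/
inductive DTree (Y : Type) (n : ℕ) : Type
  | leaf : Y → DTree Y n
  | node : Fin n → DTree Y n → DTree Y n → DTree Y n

namespace DTree

variable {Y : Type} {n : ℕ}

/-- The function computed by a decision tree: at a node labeled `i`, follow the right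
subtree if `x_i = 1` (`x i = true`) and the left subtree if `x_i = -1` (`x i = false`). -/
def eval : DTree Y n → (Fin n → Bool) → Y
  | .leaf y, _ => y
  | .node i l r, x => if x i then r.eval x else l.eval x

/-- The size of a decision tree is its number of leaves. -/
def size : DTree Y n → ℕ
  | .leaf _ => 1
  | .node _ l r => l.size + r.size

def restrict (i : Fin n) (b : Bool) : DTree Y n → DTree Y n
  | .leaf y => .leaf y
  | .node j l r =>
    if j = i then (if b then r.restrict i b else l.restrict i b)
    else .node j (l.restrict i b) (r.restrict i b)

lemma size_pos (T : DTree Y n) : 0 < T.size := by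
  induction T <;> simp [size] <;> omega

lemma size_restrict (i : Fin n) (b : Bool) (T : DTree Y n) :
    (T.restrict i b).size ≤ T.size := by
  induction T with
  | leaf y => simp [restrict, size]
  | node j l r ihl ihr =>
    simp only [restrict]
    split
    · split <;> simp [size] <;> omega
    · simp [size]; omega

lemma eval_restrict (i : Fin n) (b : Bool) (T : DTree Y n) (x : Fin n → Bool) :
    (T.restrict i b).eval x = T.eval (Function.update x i b) := by
  induction T generalizing x with
  | leaf y => simp [restrict, eval]
  | node j l r ihl ihr =>
    simp only [restrict]
    split
    · subst_vars
      cases b <;> simp [eval, ihl, ihr, Function.update_self]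
    · rename_i hji
      simp [eval, ihl, ihr, Function.update_of_ne hji]

end DTree

def bflip {n : ℕ} (i : Fin n) (x : Fin n → Bool) : Fin n → Bool :=
  Function.update x i (!(x i))

lemma bflip_invol {n : ℕ} (i : Fin n) : Function.Involutive (bflip i) := by
  intro x
  funext j
  by_cases h : j = i
  · subst h; simp [bflip]
  · simp [bflip, Function.update_of_ne h]

lemma bflip_update {n : ℕ} (i j : Fin n) (hij : i ≠ j) (x : Fin n → Bool) (c : Bool) :
    bflip j (Function.update x i c) = Function.update (bflip j x) i c := by
  unfold bflip
  rw [Function.update_of_ne (Ne.symm hij), Function.update_comm hij]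

lemma DTree.eval_restrict_update {Y : Type} {n : ℕ} (i : Fin n) (b c : Bool)
    (T : DTree Y n) (x : Fin n → Bool) :
    (T.restrict i b).eval (Function.update x i c) = (T.restrict i b).eval x := by
  rw [DTree.eval_restrict, DTree.eval_restrict, Function.update_idem]

open Finset in
lemma sum_ite_half {n : ℕ} (i : Fin n) (F : (Fin n → Bool) → ℝ)
    (hF : ∀ x c, F (Function.update x i c) = F x) :
    ∑ x : Fin n → Bool, (if x i then F x else 0) = (∑ x : Fin n → Bool, F x) / 2 := by
  have h2 : ∑ x : Fin n → Bool, (if x i then F x else 0)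
      = ∑ x : Fin n → Bool, (if x i then 0 else F x) := by
    rw [← Function.Bijective.sum_comp (Function.Involutive.bijective (bflip_invol i))
      (fun x => if x i then (0:ℝ) else F x)]
    refine Finset.sum_congr rfl fun x _ => ?_
    have h1 : bflip i x i = !(x i) := by simp [bflip]
    have h3 : F (bflip i x) = F x := hF x _
    rw [h1, h3]
    cases hx : x i <;> simp
  have h4 : ∑ x : Fin n → Bool, ((if x i then F x else 0) + (if x i then 0 else F x))
      = ∑ x : Fin n → Bool, F x := by
    refine Finset.sum_congr rfl fun x _ => ?_
    cases hx : x i <;> simp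
  rw [Finset.sum_add_distrib] at h4
  linarith

lemma sum_ite_half' {n : ℕ} (i : Fin n) (F : (Fin n → Bool) → ℝ)
    (hF : ∀ x c, F (Function.update x i c) = F x) :
    ∑ x : Fin n → Bool, (if x i then 0 else F x) = (∑ x : Fin n → Bool, F x) / 2 := by
  have h := sum_ite_half i F hF
  have h4 : ∑ x : Fin n → Bool, ((if x i then F x else 0) + (if x i then 0 else F x))
      = ∑ x : Fin n → Bool, F x := by
    refine Finset.sum_congr rfl fun x _ => ?_
    cases hx : x i <;> simp
  rw [Finset.sum_add_distrib] at h4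
  linarith

lemma log_avg (a b : ℕ) (ha : 1 ≤ a) (hb : 1 ≤ b) :
    1 + (Real.logb 2 (a:ℝ) + Real.logb 2 (b:ℝ))/2 ≤ Real.logb 2 ((a:ℝ)+(b:ℝ)) := by
  have hA : (1:ℝ) ≤ a := by exact_mod_cast ha
  have hB : (1:ℝ) ≤ b := by exact_mod_cast hb
  have hA0 : (0:ℝ) < a := by linarith
  have hB0 : (0:ℝ) < b := by linarith
  have hlog2 : 0 < Real.log 2 := Real.log_pos (by norm_num)
  have hs : Real.sqrt ((a:ℝ)*(b:ℝ)) ≤ ((a:ℝ)+(b:ℝ))/2 := by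
    nlinarith [Real.sq_sqrt (le_of_lt (mul_pos hA0 hB0)), Real.sqrt_nonneg ((a:ℝ)*(b:ℝ)),
      sq_nonneg ((a:ℝ)-(b:ℝ)), sq_nonneg (Real.sqrt ((a:ℝ)*(b:ℝ)) - ((a:ℝ)+(b:ℝ))/2)]
  have key : Real.log 2 + (Real.log a + Real.log b)/2 ≤ Real.log ((a:ℝ)+(b:ℝ)) := by
    have h1 : Real.log (2 * Real.sqrt ((a:ℝ)*(b:ℝ))) ≤ Real.log ((a:ℝ)+(b:ℝ)) := by
      apply Real.log_le_log (by positivity)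
      linarith
    rw [Real.log_mul (by norm_num) (by positivity), Real.log_sqrt (by positivity),
      Real.log_mul (ne_of_gt hA0) (ne_of_gt hB0)] at h1
    linarith
  simp only [Real.logb]
  rw [le_div_iff₀ hlog2]
  have e : (1 + (Real.log a/Real.log 2 + Real.log b/Real.log 2)/2) * Real.log 2
      = Real.log 2 + (Real.log a + Real.log b)/2 := by
    field_simp
  rw [e]
  exact key

noncomputable def totalInf {n : ℕ} (f : (Fin n → Bool) → Bool) : ℝ :=
  ∑ i : Fin n, ∑ x : Fin n → Bool, (if f x = f (bflip i x) then (0:ℝ) else 1)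

lemma inner_nonneg {n : ℕ} (f : (Fin n → Bool) → Bool) (i : Fin n) :
    0 ≤ ∑ x : Fin n → Bool, (if f x = f (bflip i x) then (0:ℝ) else 1) :=
  Finset.sum_nonneg fun x _ => by positivity

lemma total_infl_le {n : ℕ} : ∀ (N : ℕ) (T : DTree Bool n), T.size ≤ N →
    totalInf T.eval ≤ 2^n * Real.logb 2 T.size := by
  intro N
  induction N with
  | zero => intro T h; have := T.size_pos; omega
  | succ N ih =>
    intro T hT
    cases T with
    | leaf y => simp [totalInf, DTree.eval, DTree.size]
    | node i l r =>
      have hlr : l.size + r.size ≤ N + 1 := hT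
      have hlp := l.size_pos
      have hrp := r.size_pos
      set L := l.restrict i false with hLdef
      set R := r.restrict i true with hRdef
      have hLsz : L.size ≤ l.size := DTree.size_restrict i false l
      have hRsz : R.size ≤ r.size := DTree.size_restrict i true r
      have IHL := ih L (by omega)
      have IHR := ih R (by omega)
      have hLp := L.size_pos
      have hRp := R.size_pos
      -- eval formula
      have hev : ∀ x : Fin n → Bool,
          (DTree.node i l r).eval x = if x i then R.eval x else L.eval x := by
        intro x
        simp only [DTree.eval, hLdef, hRdef, DTree.eval_restrict]
        cases hx : x i
        · rw [if_neg (by simp [hx]), if_neg (by simp [hx]), ← hx, Function.update_eq_self]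
        · rw [if_pos (by simp [hx]), if_pos (by simp [hx]), ← hx, Function.update_eq_self]
      set f := (DTree.node i l r).eval with hf
      set G := fun j => ∑ x : Fin n → Bool, (if L.eval x = L.eval (bflip j x) then (0:ℝ) else 1)
        with hG
      set H := fun j => ∑ x : Fin n → Bool, (if R.eval x = R.eval (bflip j x) then (0:ℝ) else 1)
        with hH
      have hinv : ∀ (S : DTree Bool n) (b : Bool) (x : Fin n → Bool) (c : Bool),
          (S.restrict i b).eval (Function.update x i c) = (S.restrict i b).eval x :=
        fun S b x c => DTree.eval_restrict_update i b c S x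
      -- inner sum for j ≠ i
      have hne : ∀ j : Fin n, j ≠ i →
          ∑ x : Fin n → Bool, (if f x = f (bflip j x) then (0:ℝ) else 1) = (G j + H j)/2 := by
        intro j hj
        have hterm : ∀ x : Fin n → Bool,
            (if f x = f (bflip j x) then (0:ℝ) else 1)
            = (if x i then (if R.eval x = R.eval (bflip j x) then (0:ℝ) else 1) else 0)
              + (if x i then 0 else (if L.eval x = L.eval (bflip j x) then (0:ℝ) else 1)) := by
          intro x
          have hbi : bflip j x i = x i := Function.update_of_ne (Ne.symm hj) _ x
          rw [hev x, hev (bflip j x), hbi]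
          cases hx : x i <;> simp
        rw [Finset.sum_congr rfl (fun x _ => hterm x), Finset.sum_add_distrib]
        have hHinv : ∀ (x : Fin n → Bool) (c : Bool),
            (if R.eval (Function.update x i c) = R.eval (bflip j (Function.update x i c))
              then (0:ℝ) else 1)
            = (if R.eval x = R.eval (bflip j x) then (0:ℝ) else 1) := by
          intro x c
          rw [bflip_update i j (Ne.symm hj), hinv r true, hinv r true]
        have hGinv : ∀ (x : Fin n → Bool) (c : Bool),
            (if L.eval (Function.update x i c) = L.eval (bflip j (Function.update x i c))
              then (0:ℝ) else 1)
            = (if L.eval x = L.eval (bflip j x) then (0:ℝ) else 1) := by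
          intro x c
          rw [bflip_update i j (Ne.symm hj), hinv l false, hinv l false]
        rw [sum_ite_half i _ hHinv, sum_ite_half' i _ hGinv]
        rw [hG, hH]
        ring
      -- inner sum for j = i
      have hii : ∑ x : Fin n → Bool, (if f x = f (bflip i x) then (0:ℝ) else 1) ≤ 2^n := by
        calc ∑ x : Fin n → Bool, (if f x = f (bflip i x) then (0:ℝ) else 1)
            ≤ ∑ x : Fin n → Bool, (1:ℝ) := by
              apply Finset.sum_le_sum
              intro x _
              split <;> norm_num
          _ = 2^n := by simp [Fintype.card_fun]
      have hGnn : ∀ j, 0 ≤ G j := fun j => inner_nonneg L.eval j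
      have hHnn : ∀ j, 0 ≤ H j := fun j => inner_nonneg R.eval j
      have hsplit : totalInf f
          = (∑ x : Fin n → Bool, (if f x = f (bflip i x) then (0:ℝ) else 1))
            + ∑ j ∈ Finset.univ.erase i,
                ∑ x : Fin n → Bool, (if f x = f (bflip j x) then (0:ℝ) else 1) := by
        rw [totalInf, ← Finset.add_sum_erase _ _ (Finset.mem_univ i)]
      have herase : ∑ j ∈ Finset.univ.erase i,
            (∑ x : Fin n → Bool, (if f x = f (bflip j x) then (0:ℝ) else 1))
          ≤ (totalInf L.eval + totalInf R.eval)/2 := by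
        calc ∑ j ∈ Finset.univ.erase i,
              (∑ x : Fin n → Bool, (if f x = f (bflip j x) then (0:ℝ) else 1))
            = ∑ j ∈ Finset.univ.erase i, (G j + H j)/2 := by
              refine Finset.sum_congr rfl fun j hj => ?_
              exact hne j (Finset.ne_of_mem_erase hj)
          _ ≤ ∑ j : Fin n, (G j + H j)/2 := by
              apply Finset.sum_le_sum_of_subset_of_nonneg (Finset.subset_univ _)
              intro j _ _
              have := hGnn j; have := hHnn j; linarith
          _ = (totalInf L.eval + totalInf R.eval)/2 := by
              rw [totalInf, totalInf, ← Finset.sum_add_distrib, ← Finset.sum_div]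
      have hlog : (1:ℝ) + (Real.logb 2 l.size + Real.logb 2 r.size)/2
          ≤ Real.logb 2 ((l.size:ℝ) + (r.size:ℝ)) := log_avg l.size r.size hlp hrp
      have hLlog : Real.logb 2 (L.size:ℝ) ≤ Real.logb 2 (l.size:ℝ) := by
        apply Real.logb_le_logb_of_le (by norm_num : (1:ℝ) < 2) (by exact_mod_cast hLp)
        exact_mod_cast hLsz
      have hRlog : Real.logb 2 (R.size:ℝ) ≤ Real.logb 2 (r.size:ℝ) := by
        apply Real.logb_le_logb_of_le (by norm_num : (1:ℝ) < 2) (by exact_mod_cast hRp)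
        exact_mod_cast hRsz
      have h2n : (0:ℝ) < 2^n := by positivity
      have hsz : ((DTree.node i l r).size : ℝ) = (l.size:ℝ) + (r.size:ℝ) := by
        simp [DTree.size]
      rw [hsplit, hsz]
      calc (∑ x : Fin n → Bool, (if f x = f (bflip i x) then (0:ℝ) else 1))
            + ∑ j ∈ Finset.univ.erase i,
                (∑ x : Fin n → Bool, (if f x = f (bflip j x) then (0:ℝ) else 1))
          ≤ 2^n + (totalInf L.eval + totalInf R.eval)/2 := by linarith
        _ ≤ 2^n + (2^n * Real.logb 2 l.size + 2^n * Real.logb 2 r.size)/2 := by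
            nlinarith
        _ = 2^n * (1 + (Real.logb 2 l.size + Real.logb 2 r.size)/2) := by ring
        _ ≤ 2^n * Real.logb 2 ((l.size:ℝ) + (r.size:ℝ)) := by nlinarith


/-- The influence of variable `i` on `f`: `Pr[f(x) ≠ f(x^{~i})]`, where `x` is uniform and
`x^{~i}` is `x` with its `i`-th coordinate rerandomized. -/
noncomputable def infl {n : ℕ} (f : (Fin n → Bool) → Bool) (i : Fin n) : ℝ :=
  (∑ x : Fin n → Bool,
      ((if f x = f (Function.update x i true) then (0 : ℝ) else 1) +
        (if f x = f (Function.update x i false) then (0 : ℝ) else 1)) / 2) / 2 ^ n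

lemma infl_eq {n : ℕ} (f : (Fin n → Bool) → Bool) (i : Fin n) :
    infl f i = (∑ x : Fin n → Bool, (if f x = f (bflip i x) then (0:ℝ) else 1)) / 2^(n+1) := by
  unfold infl
  have h : ∀ x : Fin n → Bool,
      ((if f x = f (Function.update x i true) then (0:ℝ) else 1) +
        (if f x = f (Function.update x i false) then (0:ℝ) else 1))
      = (if f x = f (bflip i x) then (0:ℝ) else 1) := by
    intro x
    cases hx : x i
    · have h1 : Function.update x i false = x := by rw [← hx, Function.update_eq_self]
      have h2 : Function.update x i true = bflip i x := by rw [bflip, hx]; rfl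
      rw [h1, h2]; simp
    · have h1 : Function.update x i true = x := by rw [← hx, Function.update_eq_self]
      have h2 : Function.update x i false = bflip i x := by rw [bflip, hx]; rfl
      rw [h1, h2]; simp
  rw [Finset.sum_congr rfl (fun x _ => by rw [h x]), ← Finset.sum_div, div_div]
  ring_nf


/-- **Few influential variables.** If `f` is computable by a decision tree of size `s` and
`τ > 0`, then the number of `i` with `Inf_i(f) ≥ τ` is at most `(log₂ s)/τ`. -/
theorem stmt8 {n : ℕ} (s : ℕ) (τ : ℝ) (hτ : 0 < τ)
    (f : (Fin n → Bool) → Bool) (T : DTree Bool n)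
    (hsize : T.size = s) (hTf : ∀ x, T.eval x = f x) :
    (Nat.card {i : Fin n // τ ≤ infl f i} : ℝ) ≤ Real.logb 2 s / τ := by
  classical
  subst hsize
  have hfe : T.eval = f := funext hTf
  subst hfe
  have hA := total_infl_le T.size T le_rfl
  have hnn : ∀ i, 0 ≤ infl T.eval i := fun i => by rw [infl_eq]; positivity
  have hcard : (Nat.card {i : Fin n // τ ≤ infl T.eval i} : ℝ)
      = ((Finset.univ.filter (fun i => τ ≤ infl T.eval i)).card : ℝ) := by
    rw [Nat.card_eq_fintype_card, Fintype.card_subtype]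
  have h1 : ((Finset.univ.filter (fun i => τ ≤ infl T.eval i)).card : ℝ) * τ
      ≤ ∑ i ∈ Finset.univ.filter (fun i => τ ≤ infl T.eval i), infl T.eval i := by
    calc ((Finset.univ.filter (fun i => τ ≤ infl T.eval i)).card : ℝ) * τ
        = ∑ _i ∈ Finset.univ.filter (fun i => τ ≤ infl T.eval i), τ := by
          rw [Finset.sum_const, nsmul_eq_mul]
      _ ≤ _ := Finset.sum_le_sum fun i hi => (Finset.mem_filter.mp hi).2
  have h2 : ∑ i ∈ Finset.univ.filter (fun i => τ ≤ infl T.eval i), infl T.eval i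
      ≤ ∑ i : Fin n, infl T.eval i :=
    Finset.sum_le_sum_of_subset_of_nonneg (Finset.subset_univ _) fun i _ _ => hnn i
  have hsum : ∑ i : Fin n, infl T.eval i = totalInf T.eval / 2^(n+1) := by
    rw [totalInf, Finset.sum_div]
    exact Finset.sum_congr rfl fun i _ => infl_eq _ i
  have hlnn : 0 ≤ Real.logb 2 (T.size : ℝ) :=
    Real.logb_nonneg (by norm_num) (by exact_mod_cast T.size_pos)
  have h2n : (0:ℝ) < 2^n := by positivity
  have h3 : totalInf T.eval / 2^(n+1) ≤ Real.logb 2 (T.size : ℝ) := by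
    rw [div_le_iff₀ (by positivity)]
    have : (2:ℝ)^(n+1) = 2 * 2^n := by ring
    rw [this]
    nlinarith
  rw [hcard, le_div_iff₀ hτ]
  calc ((Finset.univ.filter (fun i => τ ≤ infl T.eval i)).card : ℝ) * τ
      ≤ ∑ i : Fin n, infl T.eval i := le_trans h1 h2
    _ ≤ Real.logb 2 (T.size : ℝ) := by rw [hsum]; exact h3
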